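/- Let δ(A) = α·|A| − |E(A)| with α > 0, and for A ⊆ B define A ≤* B to mean δ(A) ≤ δ(B') whenever A ⊆ B' ⊆ B. If A ≤* C and B ⊆ C, then A ∩ B ≤* B. -/
import Mathlib


def edgeCount {V : Type*} [Fintype V] [DecidableEq V] (G : SimpleGraph V)
    [DecidableRel G.Adj] (s : Finset V) : ℕ :=
  (G.edgeFinset ∩ s.sym2).card

noncomputable def pdim {V : Type*} [Fintype V] [DecidableEq V] (α : ℝ) (G : SimpleGraph V)
    [DecidableRel G.Adj] (s : Finset V) : ℝ :=
  α * s.card - edgeCount G s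

/-- `A ≤* B` : self-sufficiency of `A` in `B`. -/
def leqStar {V : Type*} [Fintype V] [DecidableEq V] (α : ℝ) (G : SimpleGraph V)
    [DecidableRel G.Adj] (A B : Finset V) : Prop :=
  A ⊆ B ∧ ∀ B' : Finset V, A ⊆ B' → B' ⊆ B → pdim α G A ≤ pdim α G B'

lemma sym2_inter_eq {V : Type*} [DecidableEq V] (X Y : Finset V) :
    (X ∩ Y).sym2 = X.sym2 ∩ Y.sym2 := by
  ext m
  simp only [Finset.mem_sym2_iff, Finset.mem_inter, Finset.mem_sym2_iff]
  exact ⟨fun h => ⟨fun a ha => (h a ha).1, fun a ha => (h a ha).2⟩,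
    fun h a ha => ⟨h.1 a ha, h.2 a ha⟩⟩

lemma edgeCount_submodular {V : Type*} [Fintype V] [DecidableEq V] (G : SimpleGraph V)
    [DecidableRel G.Adj] (X Y : Finset V) :
    edgeCount G X + edgeCount G Y ≤ edgeCount G (X ∪ Y) + edgeCount G (X ∩ Y) := by
  unfold edgeCount
  rw [← Finset.card_union_add_card_inter]
  apply Nat.add_le_add
  · apply Finset.card_le_card
    intro e he
    simp only [Finset.mem_union, Finset.mem_inter] at he ⊢
    rcases he with ⟨h1, h2⟩ | ⟨h1, h2⟩
    · refine ⟨h1, ?_⟩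
      rw [Finset.mem_sym2_iff] at h2 ⊢
      exact fun a ha => Finset.mem_union_left _ (h2 a ha)
    · refine ⟨h1, ?_⟩
      rw [Finset.mem_sym2_iff] at h2 ⊢
      exact fun a ha => Finset.mem_union_right _ (h2 a ha)
  · apply Finset.card_le_card
    rw [sym2_inter_eq]
    intro e he
    simp only [Finset.mem_inter] at he ⊢
    exact ⟨he.1.1, he.1.2, he.2.2⟩

lemma pdim_submodular {V : Type*} [Fintype V] [DecidableEq V] (α : ℝ) (G : SimpleGraph V)
    [DecidableRel G.Adj] (X Y : Finset V) :
    pdim α G (X ∪ Y) + pdim α G (X ∩ Y) ≤ pdim α G X + pdim α G Y := by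
  unfold pdim
  have hc : (X ∪ Y).card + (X ∩ Y).card = X.card + Y.card :=
    Finset.card_union_add_card_inter X Y
  have he := edgeCount_submodular G X Y
  have hc' : ((X ∪ Y).card : ℝ) + (X ∩ Y).card = X.card + Y.card := by
    exact_mod_cast congrArg (Nat.cast : ℕ → ℝ) hc
  have he' : (edgeCount G X : ℝ) + edgeCount G Y ≤ edgeCount G (X ∪ Y) + edgeCount G (X ∩ Y) := by
    exact_mod_cast he
  have h3 : α * ((X ∪ Y).card : ℝ) + α * (X ∩ Y).card = α * X.card + α * Y.card := by
    rw [← mul_add, ← mul_add, hc']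
  linarith

/-- If `A ≤* C` and `B ⊆ C` then `A ∩ B ≤* B`. -/
theorem leqStar_inter {V : Type*} [Fintype V] [DecidableEq V] (G : SimpleGraph V)
    [DecidableRel G.Adj] (α : ℝ) (hα : 0 < α) (A B C : Finset V)
    (hAC : leqStar α G A C) (hBC : B ⊆ C) : leqStar α G (A ∩ B) B := by
  obtain ⟨hAsub, hmin⟩ := hAC
  refine ⟨Finset.inter_subset_right, fun B' hsub hsub' => ?_⟩
  have hinter : A ∩ B' = A ∩ B := by
    apply Finset.Subset.antisymm
    · exact Finset.inter_subset_inter (subset_refl A) hsub'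
    · exact Finset.subset_inter Finset.inter_subset_left hsub
  have h1 : pdim α G A ≤ pdim α G (A ∪ B') :=
    hmin _ Finset.subset_union_left (Finset.union_subset hAsub (hsub'.trans hBC))
  have h2 := pdim_submodular α G A B'
  rw [hinter] at h2
  linarith
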